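/- Let (F : C ⥤ D, G : D ⥤ C) and (F' : C ⥤ D', G' : D' ⥤ C) be adjoint pairs, with units η, η' and counits ε, ε', which determine the same monad on C, i.e., G∘F = G'∘F', η = η', and GεF = G'ε'F' (whiskered composites G(ε_{F(−)}) and G'(ε'_{F'(−)}) coincide). Let I : C ⥤ X be any functor. Then F is heavily I-separable if and only if F' is heavily I-separable. -/

import Mathlib

open CategoryTheory

/-- A functor `F : C ⥤ D` is *heavily `I`-separable* (heavy separability of the second kind)
if there is a natural transformation `P : Hom_D(F −, F −) ⟶ Hom_X(I −, I −)` of functors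
`Cᵒᵖ × C ⥤ Set` such that `P (F.map f) = I.map f` and `P` is compatible with composition. -/
def HeavilyISeparable {C : Type*} [Category C] {D : Type*} [Category D]
    {X : Type*} [Category X] (F : C ⥤ D) (I : C ⥤ X) : Prop :=
  ∃ P : ∀ a b : C, (F.obj a ⟶ F.obj b) → (I.obj a ⟶ I.obj b),
    (∀ (a' a b b' : C) (u : a' ⟶ a) (v : b ⟶ b') (h : F.obj a ⟶ F.obj b),
        P a' b' (F.map u ≫ h ≫ F.map v) = I.map u ≫ P a b h ≫ I.map v) ∧
    (∀ (a b : C) (f : a ⟶ b), P a b (F.map f) = I.map f) ∧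
    (∀ (a b c : C) (f : F.obj a ⟶ F.obj b) (g : F.obj b ⟶ F.obj c),
        P a c (f ≫ g) = P a b f ≫ P b c g)

/-- A functor `F : C ⥤ D` is *heavily separable* if it is heavily `𝟭 C`-separable. -/
def HeavilySeparable {C : Type*} [Category C] {D : Type*} [Category D] (F : C ⥤ D) : Prop :=
  HeavilyISeparable F (𝟭 C)

/-- If two adjunctions `(F,G)` and `(F',G')` determine the same monad on `C`, then `F` is
heavily `I`-separable iff `F'` is. -/
def MonadISep {C : Type*} [Category C] {X : Type*} [Category X]
    (T : Monad C) (I : C ⥤ X) : Prop :=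
  ∃ Q : ∀ a b : C, (a ⟶ T.obj b) → (I.obj a ⟶ I.obj b),
    (∀ (a b : C) (f : a ⟶ b), Q a b (T.η.app a ≫ T.map f) = I.map f) ∧
    (∀ (a b c : C) (k : a ⟶ T.obj b) (l : b ⟶ T.obj c),
        Q a c (k ≫ T.map l ≫ T.μ.app c) = Q a b k ≫ Q b c l)

section
variable {C : Type*} [Category C] {D : Type*} [Category D] {X : Type*} [Category X]
    (F : C ⥤ D) (G : D ⥤ C) (adj : F ⊣ G) (I : C ⥤ X)

lemma kleisli_symm_comp (a b c : C) (k : a ⟶ G.obj (F.obj b)) (l : b ⟶ G.obj (F.obj c)) :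
    (adj.homEquiv a (F.obj b)).symm k ≫ (adj.homEquiv b (F.obj c)).symm l
      = (adj.homEquiv a (F.obj c)).symm
          (k ≫ G.map (F.map l) ≫ G.map (adj.counit.app (F.obj c))) := by
  simp [Adjunction.homEquiv_symm_apply]

lemma kleisli_unit (a b : C) (f : a ⟶ b) :
    (adj.homEquiv a (F.obj b)).symm (adj.unit.app a ≫ G.map (F.map f)) = F.map f := by
  simp [Adjunction.homEquiv_symm_apply]

lemma heavilyISeparable_iff_monadISep :
    HeavilyISeparable F I ↔ MonadISep adj.toMonad I := by
  constructor
  · rintro ⟨P, -, h2, h3⟩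
    refine ⟨fun a b k => P a b ((adj.homEquiv a (F.obj b)).symm k), ?_, ?_⟩
    · intro a b f
      beta_reduce
      rw [show (adj.toMonad.η.app a ≫ adj.toMonad.map f : a ⟶ adj.toMonad.obj b)
            = adj.unit.app a ≫ G.map (F.map f) from rfl, kleisli_unit, h2]
    · intro a b c k l
      beta_reduce
      rw [show (k ≫ adj.toMonad.map l ≫ adj.toMonad.μ.app c : a ⟶ adj.toMonad.obj c)
            = k ≫ G.map (F.map l) ≫ G.map (adj.counit.app (F.obj c)) from rfl]
      exact (congrArg (P a c) (kleisli_symm_comp F G adj a b c k l)).symm.trans (h3 _ _ _ _ _)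
  · rintro ⟨Q, h2, h3⟩
    have p2 : ∀ (a b : C) (f : a ⟶ b),
        Q a b (adj.homEquiv a (F.obj b) (F.map f)) = I.map f := by
      intro a b f
      have : adj.homEquiv a (F.obj b) (F.map f) = adj.unit.app a ≫ G.map (F.map f) := by
        simp [Adjunction.homEquiv_apply]
      rw [this]; exact h2 a b f
    have p3 : ∀ (a b c : C) (f : F.obj a ⟶ F.obj b) (g : F.obj b ⟶ F.obj c),
        Q a c (adj.homEquiv a (F.obj c) (f ≫ g))
          = Q a b (adj.homEquiv a (F.obj b) f) ≫ Q b c (adj.homEquiv b (F.obj c) g) := by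
      intro a b c f g
      have : adj.homEquiv a (F.obj c) (f ≫ g)
          = adj.homEquiv a (F.obj b) f ≫ adj.toMonad.map (adj.homEquiv b (F.obj c) g)
            ≫ adj.toMonad.μ.app c := by
        have := kleisli_symm_comp F G adj a b c (adj.homEquiv a (F.obj b) f)
          (adj.homEquiv b (F.obj c) g)
        simp only [Equiv.symm_apply_apply] at this
        rw [this, Equiv.apply_symm_apply]; rfl
      rw [this]; exact h3 a b c _ _
    refine ⟨fun a b h => Q a b (adj.homEquiv a (F.obj b) h), ?_, ?_, ?_⟩
    · intro a' a b b' u v h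
      beta_reduce
      rw [p3 a' a b' (F.map u) (h ≫ F.map v), p3 a b b' h (F.map v), p2, p2]
    · intro a b f
      exact p2 a b f
    · intro a b c f g
      exact p3 a b c f g
end


theorem heavilyISeparable_of_same_monad {C D D' X : Type*} [Category C] [Category D]
    [Category D'] [Category X]
    (F : C ⥤ D) (G : D ⥤ C) (adj : F ⊣ G)
    (F' : C ⥤ D') (G' : D' ⥤ C) (adj' : F' ⊣ G')
    (hmonad : adj.toMonad = adj'.toMonad) (I : C ⥤ X) :
    HeavilyISeparable F I ↔ HeavilyISeparable F' I := by
  rw [heavilyISeparable_iff_monadISep F G adj I,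
    heavilyISeparable_iff_monadISep F' G' adj' I, hmonad]
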